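/- Let B be a finite-dimensional Lie algebra over a field K of characteristic zero, w : B × B → B* a cyclic 2-cocycle, and T*_w B the T*-extension of B by w. For a subspace V ⊆ B write V° = {β ∈ B* : β(V) = 0}, and let rad w = {b ∈ B : w(b,b') = 0 for all b' ∈ B}. Then: (a) Z(B)° = span{β∘ad(b) : b ∈ B, β ∈ B*} and this subspace is contained in the derived algebra of T*_w B; (b) ([B,B])° = {β ∈ B* : β∘ad(b) = 0 for all b ∈ B}; (c) Z(T*_w B) ∩ B = Z(B) ∩ rad w and Z(T*_w B) ∩ B* = ([B,B])°; (d) span{w(b,b') : b,b' ∈ B} ⊆ (rad w)°. -/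

import Mathlib

open Module

variable {K B : Type*}

/-- The T*-extension bracket `[b+β, b'+β'] = [b,b'] + w(b,b') + ad*(b)(β') − ad*(b')(β)`
on `B ⊕ B*`, where `ad*(b)(β) = −β ∘ ad(b)`. -/
def tLieBr [Field K] [LieRing B] [LieAlgebra K B]
    (w : B →ₗ[K] B →ₗ[K] Module.Dual K B)
    (X Y : B × Module.Dual K B) : B × Module.Dual K B :=
  (⁅X.1, Y.1⁆,
    w X.1 Y.1 + (-(Y.2 ∘ₗ (LieAlgebra.ad K B X.1))) - (-(X.2 ∘ₗ (LieAlgebra.ad K B Y.1))))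

/-- The centre of a Lie algebra, as a submodule. -/
def centerSub (K B : Type*) [Field K] [LieRing B] [LieAlgebra K B] : Submodule K B where
  carrier := {x | ∀ y : B, ⁅x, y⁆ = 0}
  add_mem' := by
    intro a b ha hb
    simp only [Set.mem_setOf_eq] at *
    intro y
    rw [add_lie, ha y, hb y, add_zero]
  zero_mem' := by
    simp only [Set.mem_setOf_eq]
    intro y
    simp
  smul_mem' := by
    intro c a ha
    simp only [Set.mem_setOf_eq] at *
    intro y
    rw [smul_lie, ha y, smul_zero]

/-- The derived algebra of a Lie algebra, as a submodule. -/
def derivedSub (K B : Type*) [Field K] [LieRing B] [LieAlgebra K B] : Submodule K B :=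
  Submodule.span K {z | ∃ x y : B, z = ⁅x, y⁆}

/-- The radical `rad w = {b ∈ B : w(b,b') = 0 for all b'}`, as a submodule. -/
def radSub (K B : Type*) [Field K] [AddCommGroup B] [Module K B]
    (w : B →ₗ[K] B →ₗ[K] Module.Dual K B) : Submodule K B where
  carrier := {b | ∀ b' : B, w b b' = 0}
  add_mem' := by
    intro a b ha hb
    simp only [Set.mem_setOf_eq] at *
    intro b'
    simp [map_add, ha b', hb b']
  zero_mem' := by
    simp only [Set.mem_setOf_eq]
    intro b'
    simp
  smul_mem' := by
    intro c a ha
    simp only [Set.mem_setOf_eq] at *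
    intro b'
    simp [map_smul, ha b']

/-- Properties (a)–(d) of the centre, derived algebra and annihilators in a
T*-extension `T*_w B` of a Lie algebra `B` by a cyclic 2-cocycle `w`. -/
theorem stmt10 [Field K] [CharZero K] [LieRing B] [LieAlgebra K B] [FiniteDimensional K B]
    (w : B →ₗ[K] B →ₗ[K] Module.Dual K B)
    (hcyc : ∀ a b c : B, w a b c = w c a b ∧ w c a b = w b c a)
    (hskew : ∀ a b : B, w a b = - w b a)
    (hcoc : ∀ a b c : B, w ⁅a, b⁆ c + w ⁅b, c⁆ a + w ⁅c, a⁆ b =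
      -((w b c) ∘ₗ (LieAlgebra.ad K B a)) + -((w c a) ∘ₗ (LieAlgebra.ad K B b)) +
        -((w a b) ∘ₗ (LieAlgebra.ad K B c))) :
    -- (a)
    ((Submodule.dualAnnihilator (centerSub K B) =
        Submodule.span K {β' : Module.Dual K B |
          ∃ (b : B) (β : Module.Dual K B), β' = β ∘ₗ (LieAlgebra.ad K B b)}) ∧
     (∀ β ∈ Submodule.dualAnnihilator (centerSub K B),
        ((0 : B), β) ∈ Submodule.span K
          {z : B × Module.Dual K B | ∃ X Y, z = tLieBr w X Y})) ∧
    -- (b)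
    ((Submodule.dualAnnihilator (derivedSub K B) : Set (Module.Dual K B)) =
      {β : Module.Dual K B | ∀ b : B, β ∘ₗ (LieAlgebra.ad K B b) = 0}) ∧
    -- (c)
    ({b : B | ∀ Y, tLieBr w ((b, (0 : Module.Dual K B))) Y = 0} =
      {b : B | (∀ y : B, ⁅b, y⁆ = 0) ∧ ∀ b' : B, w b b' = 0}) ∧
    ({β : Module.Dual K B | ∀ Y, tLieBr w (((0 : B), β)) Y = 0} =
      (Submodule.dualAnnihilator (derivedSub K B) : Set (Module.Dual K B))) ∧
    -- (d)
    (Submodule.span K {β : Module.Dual K B | ∃ b b' : B, β = w b b'} ≤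
      Submodule.dualAnnihilator (radSub K B w)) := by

  -- notation
  set W : Submodule K (Module.Dual K B) := Submodule.span K {β' : Module.Dual K B |
      ∃ (b : B) (β : Module.Dual K B), β' = β ∘ₗ (LieAlgebra.ad K B b)} with hW
  -- (a) first part
  have hWfin : FiniteDimensional K W := inferInstance
  have ha1 : Submodule.dualAnnihilator (centerSub K B) = W := by
    have hco : W.dualCoannihilator = centerSub K B := by
      ext x
      rw [Submodule.mem_dualCoannihilator]
      constructor
      · intro h y
        have key : ∀ φ : Module.Dual K B, φ ⁅y, x⁆ = 0 := by
          intro φ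
          have : (φ ∘ₗ (LieAlgebra.ad K B y)) ∈ W :=
            Submodule.subset_span ⟨y, φ, rfl⟩
          simpa [LieAlgebra.ad_apply] using h _ this
        have : ⁅y, x⁆ = 0 := (Module.forall_dual_apply_eq_zero_iff K _).mp key
        rw [← lie_skew, this, neg_zero]
      · intro hx φ hφ
        refine Submodule.span_induction ?_ rfl (fun a b _ _ ha hb => by
          simp [LinearMap.add_apply, ha, hb]) (fun c a _ ha => by
          simp [LinearMap.smul_apply, ha]) hφ
        rintro φ' ⟨b, β, rfl⟩
        have : ⁅b, x⁆ = 0 := by rw [← lie_skew, hx b, neg_zero]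
        simp [LieAlgebra.ad_apply, this]
    rw [← hco, Subspace.dualCoannihilator_dualAnnihilator_eq]
  refine ⟨⟨ha1, ?_⟩, ?_, ?_, ?_, ?_⟩
  · -- (a) second part
    intro β hβ
    rw [ha1] at hβ
    refine Submodule.span_induction ?_ (by exact Submodule.zero_mem (Submodule.span K
        {z : B × Module.Dual K B | ∃ X Y, z = tLieBr w X Y}))
      (fun a b _ _ ha hb => by
        have := Submodule.add_mem _ ha hb
        simpa using this)
      (fun c a _ ha => by
        have := Submodule.smul_mem _ c ha
        simpa [Prod.smul_mk] using this) hβ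
    rintro φ ⟨b, β', rfl⟩
    apply Submodule.subset_span
    refine ⟨((0 : B), β'), ((b : B), 0), ?_⟩
    simp [tLieBr]
  · -- (b)
    ext β
    simp only [SetLike.mem_coe, Submodule.mem_dualAnnihilator, Set.mem_setOf_eq]
    constructor
    · intro h b
      ext y
      have : (⁅b, y⁆ : B) ∈ derivedSub K B := Submodule.subset_span ⟨b, y, rfl⟩
      simpa [LieAlgebra.ad_apply] using h _ this
    · intro h z hz
      refine Submodule.span_induction ?_ (map_zero β) (fun a b _ _ ha hb => by
        simp [map_add, ha, hb]) (fun c a _ ha => by simp [map_smul, ha]) hz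
      rintro z' ⟨x, y, rfl⟩
      have := congrFun (congrArg DFunLike.coe (h x)) y
      simpa [LieAlgebra.ad_apply] using this
  · -- (c) first part
    ext b
    simp only [Set.mem_setOf_eq]
    constructor
    · intro h
      constructor
      · intro y
        have := congrArg Prod.fst (h ((y, 0)))
        simpa [tLieBr] using this
      · intro b'
        have := congrArg Prod.snd (h ((b', 0)))
        simpa [tLieBr] using this
    · rintro ⟨h1, h2⟩ Y
      have had : LieAlgebra.ad K B b = 0 := by
        ext y; simpa [LieAlgebra.ad_apply] using h1 y
      have : (LieAlgebra.ad K B b) Y.1 = 0 := by rw [had]; rfl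
      simp [tLieBr, h1 Y.1, h2 Y.1, had, LieAlgebra.ad_apply] at *
    -- (c) second part
  · ext β
    simp only [Set.mem_setOf_eq, SetLike.mem_coe, Submodule.mem_dualAnnihilator]
    constructor
    · intro h z hz
      refine Submodule.span_induction ?_ (map_zero β) (fun a b _ _ ha hb => by
        simp [map_add, ha, hb]) (fun c a _ ha => by simp [map_smul, ha]) hz
      rintro z' ⟨x, y, rfl⟩
      have := congrArg Prod.snd (h ((x, 0)))
      simp only [tLieBr] at this
      have := congrFun (congrArg DFunLike.coe this) y
      simpa [LieAlgebra.ad_apply] using this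
    · intro h Y
      have hb : ∀ x y : B, β ⁅x, y⁆ = 0 := fun x y =>
        h _ (Submodule.subset_span ⟨x, y, rfl⟩)
      simp only [tLieBr, Prod.ext_iff]
      constructor
      · simp
      · ext y
        simp [LieAlgebra.ad_apply, hb Y.1 y]
  · -- (d)
    rw [Submodule.span_le]
    rintro φ ⟨b, b', rfl⟩
    simp only [SetLike.mem_coe, Submodule.mem_dualAnnihilator]
    intro r hr
    have hr' : ∀ x : B, w r x = 0 := hr
    have h1 : w b b' r = w r b b' := ((hcyc b b' r).1).symm ▸ rfl
    calc w b b' r = w r b b' := by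
          have := (hcyc b b' r).1; exact this
      _ = 0 := by rw [hr' b]; rfl
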